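/- For any φ ∈ Φ and t > 0, the condition sup_{x≥0} φ(x+t)/(φ(x)+φ(t)) < ∞ is equivalent to limsup_{x→∞} φ(x+t)/φ(x) < ∞. -/
import Mathlib


open Set Filter

/-- `Φ`: convex, strictly increasing bijections of `[0,∞)` (with `φ 0 = 0`). -/
def Phi (φ : ℝ → ℝ) : Prop :=
  ConvexOn ℝ (Ici 0) φ ∧ StrictMonoOn φ (Ici 0) ∧
    Set.BijOn φ (Ici 0) (Ici 0) ∧ φ 0 = 0

/-- `γ_φ^{(t)} = sup_{x ≥ 0} φ(x+t)/(φ(x)+φ(t))`, valued in `[0,∞]`. -/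
noncomputable def gamT (φ : ℝ → ℝ) (t : ℝ) : ENNReal :=
  ⨆ x : Ici (0:ℝ), ENNReal.ofReal (φ (x + t) / (φ x + φ t))

/-- For `φ ∈ Φ` and `t > 0`: `γ_φ^{(t)} < ∞` iff `limsup_{x→∞} φ(x+t)/φ(x) < ∞`. -/
theorem stmt_9 (φ : ℝ → ℝ) (hφ : Phi φ) (t : ℝ) (ht : 0 < t) :
    gamT φ t < ⊤ ↔
      Filter.limsup (fun x : ℝ => ENNReal.ofReal (φ (x + t) / φ x)) Filter.atTop < ⊤ := by
  obtain ⟨_, hmono, _, h0⟩ := hφ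
  have hmon : MonotoneOn φ (Ici 0) := hmono.monotoneOn
  have hnn : ∀ x : ℝ, 0 ≤ x → 0 ≤ φ x := fun x hx =>
    h0 ▸ hmon (mem_Ici.mpr le_rfl) (mem_Ici.mpr hx) hx
  have hφt : 0 < φ t := h0 ▸ hmono (mem_Ici.mpr le_rfl) (mem_Ici.mpr ht.le) ht
  constructor
  · intro hγ
    have hb : ∀ᶠ x in atTop, ENNReal.ofReal (φ (x + t) / φ x) ≤ 2 * gamT φ t := by
      filter_upwards [eventually_ge_atTop t] with x hx
      have hx0 : (0:ℝ) ≤ x := le_trans ht.le hx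
      have hle : φ t ≤ φ x := hmon (mem_Ici.mpr ht.le) (mem_Ici.mpr hx0) hx
      have hφx : 0 < φ x := lt_of_lt_of_le hφt hle
      have hnum : 0 ≤ φ (x + t) := hnn _ (by linarith)
      have key : φ (x + t) / φ x ≤ 2 * (φ (x + t) / (φ x + φ t)) := by
        rw [mul_div_assoc', div_le_div_iff₀ hφx (by linarith : (0:ℝ) < φ x + φ t)]
        nlinarith
      calc ENNReal.ofReal (φ (x + t) / φ x)
          ≤ ENNReal.ofReal (2 * (φ (x + t) / (φ x + φ t))) :=
            ENNReal.ofReal_le_ofReal key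
        _ = 2 * ENNReal.ofReal (φ (x + t) / (φ x + φ t)) := by
            rw [ENNReal.ofReal_mul (by norm_num : (0:ℝ) ≤ 2)]; norm_num
        _ ≤ 2 * gamT φ t := by
            gcongr
            exact le_iSup (fun y : Ici (0:ℝ) =>
              ENNReal.ofReal (φ (↑y + t) / (φ ↑y + φ t))) ⟨x, mem_Ici.mpr hx0⟩
    have := Filter.limsup_le_of_le (by isBoundedDefault) hb
    refine lt_of_le_of_lt this ?_
    exact ENNReal.mul_lt_top (by norm_num) hγ
  · intro hL
    set L := Filter.limsup (fun x : ℝ => ENNReal.ofReal (φ (x + t) / φ x)) Filter.atTop with hLdef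
    have hev : ∀ᶠ x in atTop, ENNReal.ofReal (φ (x + t) / φ x) < L + 1 :=
      Filter.eventually_lt_of_limsup_lt (ENNReal.lt_add_right hL.ne one_ne_zero)
    obtain ⟨X, hX⟩ := eventually_atTop.mp hev
    set X' : ℝ := max X t with hX'def
    have hX'0 : (0:ℝ) ≤ X' := le_trans ht.le (le_max_right _ _)
    have hbound : gamT φ t ≤ max (L + 1) (ENNReal.ofReal (φ (X' + t) / φ t)) := by
      apply iSup_le
      rintro ⟨x, hx⟩
      simp only [mem_Ici] at hx
      rcases le_total x X' with h | h
      · refine le_max_of_le_right (ENNReal.ofReal_le_ofReal ?_)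
        refine div_le_div₀ (hnn _ (by linarith)) ?_ hφt ?_
        · exact hmon (mem_Ici.mpr (by linarith)) (mem_Ici.mpr (by linarith)) (by linarith)
        · have := hnn x hx; linarith
      · have hxt : t ≤ x := le_trans (le_max_right _ _) h
        have hle : φ t ≤ φ x := hmon (mem_Ici.mpr ht.le) (mem_Ici.mpr hx) hxt
        have hφx : 0 < φ x := lt_of_lt_of_le hφt hle
        have hnum : 0 ≤ φ (x + t) := hnn _ (by linarith)
        refine le_max_of_le_left ?_
        calc ENNReal.ofReal (φ (x + t) / (φ x + φ t))
            ≤ ENNReal.ofReal (φ (x + t) / φ x) :=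
              ENNReal.ofReal_le_ofReal
                (div_le_div_of_nonneg_left hnum hφx (by linarith))
          _ ≤ L + 1 := (hX x (le_trans (le_max_left _ _) h)).le
    refine lt_of_le_of_lt hbound (max_lt ?_ ENNReal.ofReal_lt_top)
    exact ENNReal.add_lt_top.mpr ⟨hL, ENNReal.one_lt_top⟩
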